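/- If an infinitesimal stochastic matrix H is irreducible (in the sense that its associated graph with edges where H_{ij} > 0 is strongly connected) and satisfies Kolmogorov's criterion, then H admits a detailed balanced equilibrium q with all q_i > 0. -/

import Mathlib

namespace KolmogorovDBAux

variable {V : Type*}

/-- Product of `G` over consecutive pairs of a list. -/
def wt (G : V → V → ℝ) : List V → ℝ
  | [] => 1
  | [_] => 1
  | a :: b :: t => G a b * wt G (b :: t)

@[simp] lemma wt_nil (G : V → V → ℝ) : wt G [] = 1 := rfl
@[simp] lemma wt_single (G : V → V → ℝ) (a : V) : wt G [a] = 1 := rfl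
@[simp] lemma wt_cons_cons (G : V → V → ℝ) (a b : V) (t : List V) :
    wt G (a :: b :: t) = G a b * wt G (b :: t) := rfl

lemma wt_append (G : V → V → ℝ) : ∀ (p : List V) (x : V) (t : List V),
    wt G (p ++ x :: t) = wt G (p ++ [x]) * wt G (x :: t)
  | [], x, t => by simp
  | [a], x, t => by simp
  | a :: b :: p, x, t => by
      simp only [List.cons_append, wt_cons_cons]
      rw [← List.cons_append, ← List.cons_append, wt_append G (b :: p) x t]; ring

lemma wt_glue (G : V → V → ℝ) (p q : List V) (hp : p ≠ []) (hq : q ≠ [])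
    (h : p.getLast hp = q.head hq) :
    wt G (p ++ q.tail) = wt G p * wt G q := by
  obtain ⟨x, q', rfl⟩ : ∃ x q', q = x :: q' := ⟨q.head hq, q.tail, (List.cons_head_tail hq).symm⟩
  have hx : p.getLast hp = x := h
  have hsplit : p ++ q' = p.dropLast ++ (x :: q') := by
    conv_lhs => rw [← List.dropLast_append_getLast hp]
    simp [hx]
  have : wt G (p ++ (x :: q').tail) = wt G (p.dropLast ++ [x]) * wt G (x :: q') := by
    rw [List.tail_cons, hsplit, wt_append]
  rw [this, ← hx, List.dropLast_append_getLast hp]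

lemma wt_reverse (G : V → V → ℝ) : ∀ l : List V, wt G l.reverse = wt (fun a b => G b a) l
  | [] => by simp
  | [a] => by simp
  | a :: b :: t => by
      have h1 : (a :: b :: t).reverse = t.reverse ++ b :: [a] := by simp
      rw [h1, wt_append, ← List.reverse_cons, wt_reverse G (b :: t)]
      simp [mul_comm]

lemma wt_eq_prod (G : V → V → ℝ) (d : V) : ∀ (t : List V) (a : V),
    wt G (a :: t) = ∏ k ∈ Finset.range t.length, G ((a :: t).getD k d) ((a :: t).getD (k+1) d)
  | [], a => by simp
  | b :: t, a => by
      rw [wt_cons_cons, wt_eq_prod G d t b, List.length_cons, Finset.prod_range_succ']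
      simp [mul_comm]

lemma wt_pos (G : V → V → ℝ) : ∀ (l : List V) (a : V),
    List.Chain (fun x y => 0 < G x y) a l → 0 < wt G (a :: l)
  | [], a, _ => by simp
  | b :: t, a, h => by
      simp only [List.Chain, List.isChain_cons_cons] at h
      exact mul_pos h.1 (wt_pos G t b h.2)

lemma chain_append_singleton {R : V → V → Prop} : ∀ (l : List V) (a x : V),
    List.Chain R a l → R ((a :: l).getLast (List.cons_ne_nil _ _)) x →
    List.Chain R a (l ++ [x])
  | [], a, x, _, h2 => List.IsChain.cons_cons h2 (List.IsChain.singleton _)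
  | b :: t, a, x, h1, h2 => by
      simp only [List.Chain, List.isChain_cons_cons] at h1
      rw [List.cons_append]; simp only [List.Chain, List.isChain_cons_cons]
      exact ⟨h1.1, chain_append_singleton t b x h1.2 (by simpa using h2)⟩

lemma getLast_congr (l l' : List V) (hl : l ≠ []) (hl' : l' ≠ []) (h : l = l') :
    l.getLast hl = l'.getLast hl' := by subst h; rfl

end KolmogorovDBAux

open KolmogorovDBAux in
/-- An irreducible infinitesimal stochastic matrix satisfying Kolmogorov's
criterion admits a detailed balanced equilibrium with all positive populations. -/
theorem kolmogorov_implies_detailed_balanced_equilibrium {V : Type*} [Fintype V]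
    (H : V → V → ℝ)
    (hoff : ∀ i j, i ≠ j → 0 ≤ H i j)
    (hsum : ∀ j, ∑ i, H i j = 0)
    (hirr : ∀ i j : V, Relation.ReflTransGen (fun a b => 0 < H b a) i j)
    (hkol : ∀ (n : ℕ) (c : ℕ → V), c n = c 0 →
      ∏ k ∈ Finset.range n, H (c k) (c (k + 1)) =
      ∏ k ∈ Finset.range n, H (c (k + 1)) (c k)) :
    ∃ q : V → ℝ, (∀ i, 0 < q i) ∧ ∀ i j, H i j * q j = H j i * q i := by
  rcases isEmpty_or_nonempty V with hV | hV
  · exact ⟨fun _ => 1, fun i => isEmptyElim i, fun i => isEmptyElim i⟩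
  -- notation
  set R : V → V → Prop := fun a b => 0 < H b a with hR
  set Fw : V → V → ℝ := fun a b => H b a with hFw
  -- diagonal entries are nonpositive
  have hdiag : ∀ a, H a a ≤ 0 := by
    intro a
    classical
    have h : H a a + ∑ i ∈ Finset.univ.erase a, H i a = ∑ i, H i a :=
      Finset.add_sum_erase _ (fun i => H i a) (Finset.mem_univ a)
    rw [hsum a] at h
    have hnn : 0 ≤ ∑ i ∈ Finset.univ.erase a, H i a :=
      Finset.sum_nonneg fun i hi => hoff i a (Finset.ne_of_mem_erase hi)
    linarith
  -- the cycle identity in list form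
  have hcycle : ∀ (a : V) (l : List V),
      (a :: l).getLast (List.cons_ne_nil _ _) = a → wt Fw (a :: l) = wt H (a :: l) := by
    intro a l hlast
    have hc : ((a :: l).getD l.length a) = ((a :: l).getD 0 a) := by
      rw [List.getD_eq_getElem _ _ (by simp), List.getD_eq_getElem _ _ (by simp)]
      rw [List.getLast_eq_getElem] at hlast
      simpa using hlast
    have hk := hkol l.length (fun k => (a :: l).getD k a) hc
    rw [wt_eq_prod Fw a l a, wt_eq_prod H a l a]
    exact hk.symm
  -- symmetry of positivity
  have hsym : ∀ a b, 0 < H b a → 0 < H a b := by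
    intro a b hba
    have hne : a ≠ b := by
      rintro rfl; exact absurd hba (not_lt.2 (hdiag a))
    obtain ⟨l, hchain, hlast⟩ := List.exists_isChain_cons_of_relationReflTransGen (hirr b a)
    have hcyc : (a :: b :: l).getLast (List.cons_ne_nil _ _) = a := by
      rw [List.getLast_cons (List.cons_ne_nil _ _)]; exact hlast
    have heq := hcycle a (b :: l) hcyc
    have hpos : 0 < wt Fw (a :: b :: l) :=
      wt_pos Fw (b :: l) a (List.Chain.cons hba hchain)
    rw [heq, wt_cons_cons] at hpos
    have hab : H a b ≠ 0 := by
      intro h0; rw [h0, zero_mul] at hpos; exact lt_irrefl 0 hpos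
    exact lt_of_le_of_ne (hoff a b hne) (Ne.symm hab)
  -- positivity of reverse weights along chains
  have hwtH_pos : ∀ (l : List V) (a : V), List.Chain R a l → 0 < wt H (a :: l) := by
    intro l a h
    exact wt_pos H l a (List.IsChain.imp (fun ⦃x y⦄ hxy => hsym x y hxy) h)
  -- path independence
  have hindep : ∀ (l₁ l₂ : List V) (v0 x : V), List.Chain R v0 l₁ → List.Chain R v0 l₂ →
      (v0 :: l₁).getLast (List.cons_ne_nil _ _) = x →
      (v0 :: l₂).getLast (List.cons_ne_nil _ _) = x →
      wt Fw (v0 :: l₁) * wt H (v0 :: l₂) = wt H (v0 :: l₁) * wt Fw (v0 :: l₂) := by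
    intro l₁ l₂ v0 x hc1 hc2 hl1 hl2
    have hqne : (v0 :: l₂).reverse ≠ [] := by simp
    have hqhead : (v0 :: l₂).reverse.head hqne = x := by
      rw [List.head_reverse]; exact hl2
    have hqlast : (v0 :: l₂).reverse.getLast hqne = v0 := by
      rw [List.getLast_reverse]; rfl
    set t : List V := (v0 :: l₂).reverse.tail with htdef
    have hqct : (v0 :: l₂).reverse = x :: t := by
      conv_lhs => rw [← List.cons_head_tail hqne, hqhead]
    have hcyclast : (v0 :: (l₁ ++ t)).getLast (List.cons_ne_nil _ _) = v0 := by
      rcases eq_or_ne t [] with ht | ht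
      · have hrev : (v0 :: l₂) = [x] := by
          rw [← List.reverse_reverse (v0 :: l₂), hqct, ht]; rfl
        have hv0x : v0 = x := by injection hrev
        rw [getLast_congr _ (v0 :: l₁) _ (List.cons_ne_nil _ _) (by simp [ht]), hl1, hv0x]
      · rw [getLast_congr _ ((v0 :: l₁) ++ t) _
          (List.append_ne_nil_of_right_ne_nil _ ht) (by simp),
          List.getLast_append_of_ne_nil _ ht]
        have h2 := hqlast
        rw [getLast_congr _ (x :: t) hqne (List.cons_ne_nil _ _) hqct,
          List.getLast_cons ht] at h2
        exact h2
    have hcyc : wt Fw (v0 :: (l₁ ++ t)) = wt H (v0 :: (l₁ ++ t)) := hcycle _ _ hcyclast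
    have hglueF := wt_glue Fw (v0 :: l₁) ((v0 :: l₂).reverse) (List.cons_ne_nil _ _) hqne
      (hl1.trans hqhead.symm)
    have hglueH := wt_glue H (v0 :: l₁) ((v0 :: l₂).reverse) (List.cons_ne_nil _ _) hqne
      (hl1.trans hqhead.symm)
    have e1 : wt Fw (v0 :: (l₁ ++ t)) = wt Fw (v0 :: l₁) * wt Fw ((v0 :: l₂).reverse) := by
      rw [← List.cons_append]; exact hglueF
    have e2 : wt H (v0 :: (l₁ ++ t)) = wt H (v0 :: l₁) * wt H ((v0 :: l₂).reverse) := by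
      rw [← List.cons_append]; exact hglueH
    have hF : wt Fw ((v0 :: l₂).reverse) = wt H (v0 :: l₂) := by
      rw [wt_reverse]
    have hH : wt H ((v0 :: l₂).reverse) = wt Fw (v0 :: l₂) := by
      rw [wt_reverse]
    rw [e1, e2, hF, hH] at hcyc
    exact hcyc
  -- construct q from chosen paths
  obtain ⟨v0⟩ := hV
  have hpa : ∀ i : V, ∃ l, List.Chain R v0 l ∧ (v0 :: l).getLast (List.cons_ne_nil _ _) = i :=
    fun i => List.exists_isChain_cons_of_relationReflTransGen (hirr v0 i)
  set L : V → List V := fun i => (hpa i).choose with hL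
  have hLc : ∀ i, List.Chain R v0 (L i) := fun i => (hpa i).choose_spec.1
  have hLl : ∀ i, (v0 :: L i).getLast (List.cons_ne_nil _ _) = i := fun i => (hpa i).choose_spec.2
  refine ⟨fun i => wt Fw (v0 :: L i) / wt H (v0 :: L i), ?_, ?_⟩
  · intro i
    exact div_pos (wt_pos Fw (L i) v0 (hLc i)) (hwtH_pos (L i) v0 (hLc i))
  · intro i j
    rcases eq_or_ne i j with rfl | hne
    · rfl
    rcases eq_or_lt_of_le (hoff i j hne) with h0 | hij
    · -- H i j = 0, then H j i = 0 too
      have hji : H j i = 0 := by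
        by_contra h
        have hpos : 0 < H j i := lt_of_le_of_ne (hoff j i hne.symm) (Ne.symm h)
        have h2 := hsym i j hpos
        rw [← h0] at h2
        exact lt_irrefl 0 h2
      rw [← h0, hji, zero_mul, zero_mul]
    · -- H i j > 0, hence H j i > 0
      have hji : 0 < H j i := hsym j i hij
      -- extended path: v0 :: (L j ++ [i])
      have hchain' : List.Chain R v0 (L j ++ [i]) :=
        chain_append_singleton (L j) v0 i (hLc j) (by rw [hLl j]; exact hij)
      have hlast' : (v0 :: (L j ++ [i])).getLast (List.cons_ne_nil _ _) = i := by
        rw [getLast_congr _ ((v0 :: L j) ++ [i]) (List.cons_ne_nil _ _)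
          (List.append_ne_nil_of_right_ne_nil _ (List.cons_ne_nil _ _)) (by simp),
          List.getLast_append_of_ne_nil _ (List.cons_ne_nil _ _)]
        simp
      have hid := hindep (L j ++ [i]) (L i) v0 i hchain' (hLc i) hlast' (hLl i)
      -- decompose the extended path's weights
      have hgF : wt Fw (v0 :: (L j ++ [i])) = wt Fw (v0 :: L j) * H i j := by
        have := wt_glue Fw (v0 :: L j) [j, i] (List.cons_ne_nil _ _) (List.cons_ne_nil _ _)
          (by rw [hLl j]; rfl)
        simpa [mul_comm] using this
      have hgH : wt H (v0 :: (L j ++ [i])) = wt H (v0 :: L j) * H j i := by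
        have := wt_glue H (v0 :: L j) [j, i] (List.cons_ne_nil _ _) (List.cons_ne_nil _ _)
          (by rw [hLl j]; rfl)
        simpa [mul_comm] using this
      rw [hgF, hgH] at hid
      have hBi : 0 < wt H (v0 :: L i) := hwtH_pos (L i) v0 (hLc i)
      have hBj : 0 < wt H (v0 :: L j) := hwtH_pos (L j) v0 (hLc j)
      field_simp
      nlinarith [hid]
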